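/- The image of the map ψ : (ℂ³)³ → ℂ⁷ defined by ψ(u₁,u₂,u₃) = (u₁·u₁, u₂·u₂, u₃·u₃, u₁·u₂, u₁·u₃, u₂·u₃, det[u₁ u₂ u₃]) is exactly the hypersurface {x ∈ ℂ⁷ : f(x) = 0}, where u·v denotes the standard (non-conjugated) bilinear dot product on ℂ³ and det[u₁ u₂ u₃] is the determinant of the 3×3 matrix with columns u₁,u₂,u₃. That is, a point (x₁,…,x₇) ∈ ℂ⁷ is of the form ψ(u₁,u₂,u₃) for some u₁,u₂,u₃ ∈ ℂ³ if and only if f(x₁,…,x₇) = 0. -/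

import Mathlib

open Complex

/-- Auxiliary predicate: `(a,b,c,d,e,f,g)` is in the image of ψ. -/
def Sol (a b c d e f g : ℂ) : Prop :=
  ∃ u₁ u₂ u₃ : Fin 3 → ℂ,
      a = ∑ i, u₁ i * u₁ i ∧ b = ∑ i, u₂ i * u₂ i ∧ c = ∑ i, u₃ i * u₃ i ∧
      d = ∑ i, u₁ i * u₂ i ∧ e = ∑ i, u₁ i * u₃ i ∧ f = ∑ i, u₂ i * u₃ i ∧
      g = Matrix.det (Matrix.of fun i j => ![u₁, u₂, u₃] j i)

lemma sol_neg {a b c d e f g : ℂ} (h : Sol a b c d e f g) : Sol a b c d e f (-g) := by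
  obtain ⟨u₁, u₂, u₃, h1, h2, h3, h4, h5, h6, h7⟩ := h
  refine ⟨![u₁ 0, u₁ 1, -u₁ 2], ![u₂ 0, u₂ 1, -u₂ 2], ![u₃ 0, u₃ 1, -u₃ 2],
    ?_, ?_, ?_, ?_, ?_, ?_, ?_⟩ <;>
    simp only [h1, h2, h3, h4, h5, h6, h7, Matrix.det_fin_three, Fin.sum_univ_three] <;>
    simp <;> ring

lemma sol_of_sq {a b c d e f g g₀ : ℂ} (h : Sol a b c d e f g₀) (hsq : g₀ ^ 2 = g ^ 2) :
    Sol a b c d e f g := by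
  have h0 : (g₀ - g) * (g₀ + g) = 0 := by linear_combination hsq
  rcases mul_eq_zero.mp h0 with h' | h'
  · rwa [← sub_eq_zero.mp h']
  · have hg : g = -g₀ := by linear_combination h'
    rw [hg]; exact sol_neg h

lemma sol_swap12 {a b c d e f g : ℂ} (h : Sol a b c d e f g) : Sol b a c d f e (-g) := by
  obtain ⟨u₁, u₂, u₃, h1, h2, h3, h4, h5, h6, h7⟩ := h
  refine ⟨u₂, u₁, u₃, h2, h1, h3, ?_, h6, h5, ?_⟩
  · rw [h4]; apply Finset.sum_congr rfl; intros; ring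
  · rw [h7]; simp [Matrix.det_fin_three]; ring

lemma sol_rot {a b c d e f g : ℂ} (h : Sol a b c d e f g) : Sol c a b e f d g := by
  obtain ⟨u₁, u₂, u₃, h1, h2, h3, h4, h5, h6, h7⟩ := h
  refine ⟨u₃, u₁, u₂, h3, h1, h2, ?_, ?_, h4, ?_⟩
  · rw [h5]; apply Finset.sum_congr rfl; intros; ring
  · rw [h6]; apply Finset.sum_congr rfl; intros; ring
  · rw [h7]; simp [Matrix.det_fin_three]; ring

/-- The isotropic-vector construction when `b = (d/s)²`. -/
lemma case1_iso (b c d e f s w v : ℂ) (hs0 : s ≠ 0)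
    (hb' : b = (d / s) ^ 2) (hw' : f = d * e / s ^ 2 + w)
    (hv : w * v = c - (e / s) ^ 2) :
    Sol (s ^ 2) b c d e f (-I * s * w) := by
  have hI := I_sq
  have hI4 : (2 * I) ^ 2 = (-4 : ℂ) := by linear_combination 4 * hI
  refine ⟨![s, 0, 0], ![d / s, 1, I], ![e / s, (w + v) / 2, (w - v) / (2 * I)],
    ?_, ?_, ?_, ?_, ?_, ?_, ?_⟩ <;>
    simp only [Fin.sum_univ_three, Matrix.det_fin_three, Matrix.of_apply, Matrix.cons_val',
      Matrix.cons_val_zero, Matrix.cons_val_one, Matrix.head_cons, Matrix.cons_val_two,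
      Matrix.tail_cons, Matrix.head_fin_const, Matrix.empty_val', Matrix.cons_val_fin_one]
  · ring
  · rw [hb']; linear_combination -hI
  · rw [show e / s * (e / s) + (w + v) / 2 * ((w + v) / 2) + (w - v) / (2 * I) * ((w - v) / (2 * I))
        = (e / s) ^ 2 + (w + v) ^ 2 / 4 + (w - v) ^ 2 / ((2 * I) ^ 2) by ring, hI4]
    linear_combination -hv
  · field_simp; ring
  · field_simp; ring
  · have hIc : I * ((w - v) / (2 * I)) = (w - v) / 2 := by
      field_simp [I_ne_zero]
    rw [hIc, hw']; ring
  · field_simp [I_ne_zero]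
    linear_combination (2 * s * (v - w)) * hI + (s * w * 2 - s * v * 2 - s ^ 2 * w + s ^ 2 * v) * hI

/-- Main construction when the first diagonal Gram entry is nonzero. -/
lemma case1 (a b c d e f g : ℂ) (ha : a ≠ 0)
    (hf : a * b * c + 2 * d * e * f - a * f ^ 2 - b * e ^ 2 - c * d ^ 2 - g ^ 2 = 0) :
    Sol a b c d e f g := by
  obtain ⟨s, hs⟩ := IsAlgClosed.exists_pow_nat_eq a (n := 2) (by norm_num)
  have hs0 : s ≠ 0 := fun h => ha (by rw [← hs, h]; ring)
  by_cases hb : b - (d / s) ^ 2 = 0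
  · have hb' : b = (d / s) ^ 2 := by linear_combination hb
    by_cases hw : f - d * e / s ^ 2 = 0
    · -- fully degenerate : g = 0
      obtain ⟨c3, hc3⟩ := IsAlgClosed.exists_pow_nat_eq (c - (e / s) ^ 2) (n := 2) (by norm_num)
      have hw' : f = d * e / s ^ 2 := by linear_combination hw
      have hg : g = 0 := by
        have h8 : g ^ 2 * s ^ 8 = 0 := by
          rw [hb', hw', ← hs] at hf
          field_simp at hf
          linear_combination (-s ^ 6) * hf
        have h2 : g ^ 2 = 0 := (mul_eq_zero.mp h8).resolve_right (pow_ne_zero 8 hs0)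
        exact pow_eq_zero_iff (n := 2) (by norm_num) |>.mp h2
      refine ⟨![s, 0, 0], ![d / s, 0, 0], ![e / s, c3, 0], ?_, ?_, ?_, ?_, ?_, ?_, ?_⟩ <;>
        simp only [Fin.sum_univ_three, Matrix.det_fin_three, Matrix.of_apply, Matrix.cons_val',
          Matrix.cons_val_zero, Matrix.cons_val_one, Matrix.head_cons, Matrix.cons_val_two,
          Matrix.tail_cons, Matrix.head_fin_const, Matrix.empty_val', Matrix.cons_val_fin_one]
      · rw [← hs]; ring
      · rw [hb']; ring
      · rw [show e / s * (e / s) + c3 * c3 + 0 * 0 = (e / s) ^ 2 + c3 ^ 2 by ring, hc3]; ring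
      · field_simp; ring
      · field_simp; ring
      · rw [hw']; field_simp; ring
      · rw [hg]; ring
    · -- isotropic trick
      have key : (-I * s * (f - d * e / s ^ 2)) ^ 2 = g ^ 2 := by
        have hfw : s ^ 2 * (f - d * e / s ^ 2) ^ 2 + g ^ 2 = 0 := by
          rw [hb', ← hs] at hf
          field_simp at hf ⊢
          linear_combination -hf
        linear_combination (s ^ 2 * (f - d * e / s ^ 2) ^ 2) * I_sq - hfw
      have hv : (f - d * e / s ^ 2) * ((c - (e / s) ^ 2) / (f - d * e / s ^ 2))
          = c - (e / s) ^ 2 := by rw [mul_div_assoc', mul_div_cancel_left₀ _ hw]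
      have h := case1_iso b c d e f s (f - d * e / s ^ 2)
        ((c - (e / s) ^ 2) / (f - d * e / s ^ 2)) hs0 hb' (by ring) hv
      rw [← hs]
      exact sol_of_sq h key
  · -- generic case
    obtain ⟨t, ht⟩ := IsAlgClosed.exists_pow_nat_eq (b - (d / s) ^ 2) (n := 2) (by norm_num)
    have ht0 : t ≠ 0 := fun h => hb (by rw [← ht, h]; ring)
    obtain ⟨r, hr⟩ :=
      IsAlgClosed.exists_pow_nat_eq (c - (e / s) ^ 2 - ((f - d * e / s ^ 2) / t) ^ 2) (n := 2)
        (by norm_num)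
    have key : (s * t * r) ^ 2 = g ^ 2 := by
      have ht' : t ^ 2 = b - d ^ 2 / a := by rw [ht, ← hs]; ring
      have hr' : r ^ 2 = c - e ^ 2 / a - ((f - d * e / a) / t) ^ 2 := by rw [hr, ← hs]; ring
      have ht2 : t ^ 2 * a = b * a - d ^ 2 := by rw [ht']; field_simp
      have h : (s * t * r) ^ 2 = s ^ 2 * t ^ 2 * r ^ 2 := by ring
      rw [h, hs, hr', ht']
      field_simp
      linear_combination (a * (b * a - d ^ 2)) * hf +
        ((c * a - e ^ 2) * (b * a - d ^ 2) - g ^ 2 * a) * ht2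
    apply sol_of_sq (g₀ := s * t * r) _ key
    refine ⟨![s, 0, 0], ![d / s, t, 0], ![e / s, (f - d * e / s ^ 2) / t, r],
      ?_, ?_, ?_, ?_, ?_, ?_, ?_⟩ <;>
      simp only [Fin.sum_univ_three, Matrix.det_fin_three, Matrix.of_apply, Matrix.cons_val',
        Matrix.cons_val_zero, Matrix.cons_val_one, Matrix.head_cons, Matrix.cons_val_two,
        Matrix.tail_cons, Matrix.head_fin_const, Matrix.empty_val', Matrix.cons_val_fin_one]
    · rw [← hs]; ring
    · rw [show d / s * (d / s) + t * t + 0 * 0 = (d / s) ^ 2 + t ^ 2 by ring, ht]; ring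
    · rw [show e / s * (e / s) + (f - d * e / s ^ 2) / t * ((f - d * e / s ^ 2) / t) + r * r
          = (e / s) ^ 2 + ((f - d * e / s ^ 2) / t) ^ 2 + r ^ 2 by ring, hr]; ring
    · field_simp; ring
    · field_simp; ring
    · field_simp; ring
    · field_simp; ring

/-- Construction when all diagonal Gram entries vanish but `d ≠ 0`. -/
lemma caseC (d e f g : ℂ) (hd : d ≠ 0) (hf : 2 * d * e * f - g ^ 2 = 0) :
    Sol 0 0 0 d e f g := by
  have hI := I_sq
  obtain ⟨ε, hε⟩ := IsAlgClosed.exists_pow_nat_eq (-2 * e * f / d) (n := 2) (by norm_num)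
  have key : (-I * d * ε) ^ 2 = g ^ 2 := by
    have hε2 : ε ^ 2 * d = -2 * e * f := by rw [hε]; field_simp
    linear_combination (d ^ 2 * ε ^ 2) * hI - d * hε2 + hf
  apply sol_of_sq (g₀ := -I * d * ε) _ key
  refine ⟨![1, I, 0], ![d / 2, -I * d / 2, 0],
    ![f / d + e / 2, I * (f / d - e / 2), ε], ?_, ?_, ?_, ?_, ?_, ?_, ?_⟩ <;>
    simp only [Fin.sum_univ_three, Matrix.det_fin_three, Matrix.of_apply, Matrix.cons_val',
      Matrix.cons_val_zero, Matrix.cons_val_one, Matrix.head_cons, Matrix.cons_val_two,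
      Matrix.tail_cons, Matrix.head_fin_const, Matrix.empty_val', Matrix.cons_val_fin_one]
  · linear_combination -hI
  · linear_combination (-(d ^ 2 / 4)) * hI
  · have h2 : (f / d + e / 2) * (f / d + e / 2) + I * (f / d - e / 2) * (I * (f / d - e / 2))
        + ε * ε = (1 + I ^ 2) * (f / d - e / 2) ^ 2 + 2 * e * f / d + ε ^ 2 := by ring
    rw [h2, hε, I_sq]; field_simp; ring
  · linear_combination (d / 2) * hI
  · field_simp; linear_combination (e * d - 2 * f) * hI
  · field_simp; linear_combination (2 * f * d - d ^ 2 * e) * hI + (f * 2 - f * d * 2 - d * e + d ^ 2 * e) * hI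
  · field_simp; ring

lemma main_back (a b c d e f g : ℂ)
    (hf : a * b * c + 2 * d * e * f - a * f ^ 2 - b * e ^ 2 - c * d ^ 2 - g ^ 2 = 0) :
    Sol a b c d e f g := by
  by_cases ha : a ≠ 0
  · exact case1 a b c d e f g ha hf
  push_neg at ha; subst ha
  by_cases hb : b ≠ 0
  · have h := case1 b 0 c d f e g hb (by linear_combination hf)
    exact sol_of_sq (sol_swap12 h) (by ring)
  push_neg at hb; subst hb
  by_cases hc : c ≠ 0
  · have h := case1 c 0 0 e f d g hc (by linear_combination hf)
    exact sol_rot (sol_rot h)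
  push_neg at hc; subst hc
  by_cases hd : d ≠ 0
  · exact caseC d e f g hd (by linear_combination hf)
  push_neg at hd; subst hd
  by_cases he : e ≠ 0
  · have h := caseC e f 0 g he (by linear_combination hf)
    exact sol_rot (sol_rot h)
  push_neg at he; subst he
  by_cases hf6 : f ≠ 0
  · have h := caseC f 0 0 g hf6 (by linear_combination hf)
    exact sol_rot h
  push_neg at hf6; subst hf6
  have hg : g = 0 := by
    have h2 : g ^ 2 = 0 := by linear_combination -hf
    exact pow_eq_zero_iff (n := 2) (by norm_num) |>.mp h2
  subst hg
  refine ⟨0, 0, 0, ?_, ?_, ?_, ?_, ?_, ?_, ?_⟩ <;>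
    simp [Matrix.det_fin_three, Fin.sum_univ_three]

theorem image_of_psi_is_hypersurface (x : Fin 7 → ℂ) :
    (∃ u₁ u₂ u₃ : Fin 3 → ℂ,
      x 0 = ∑ i, u₁ i * u₁ i ∧
      x 1 = ∑ i, u₂ i * u₂ i ∧
      x 2 = ∑ i, u₃ i * u₃ i ∧
      x 3 = ∑ i, u₁ i * u₂ i ∧
      x 4 = ∑ i, u₁ i * u₃ i ∧
      x 5 = ∑ i, u₂ i * u₃ i ∧
      x 6 = Matrix.det (Matrix.of fun i j => ![u₁, u₂, u₃] j i)) ↔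
    x 0 * x 1 * x 2 + 2 * x 3 * x 4 * x 5
      - x 0 * x 5 ^ 2 - x 1 * x 4 ^ 2 - x 2 * x 3 ^ 2 - x 6 ^ 2 = 0 := by
  constructor
  · rintro ⟨u₁, u₂, u₃, h1, h2, h3, h4, h5, h6, h7⟩
    simp only [h1, h2, h3, h4, h5, h6, h7, Fin.sum_univ_three, Matrix.det_fin_three,
      Matrix.of_apply, Matrix.cons_val', Matrix.cons_val_zero, Matrix.cons_val_one,
      Matrix.head_cons, Matrix.cons_val_two, Matrix.tail_cons, Matrix.head_fin_const,
      Matrix.empty_val', Matrix.cons_val_fin_one]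
    ring
  · intro hf
    exact main_back _ _ _ _ _ _ _ hf
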